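/- For 0 ≤ k ≤ (n+1)/2, T_{n+2}^k(x,s,q) = x U_{n+1}^k(x, q²s, q) + q s U_n^{k-1}(x, q²s, q); that is, the incomplete q-Chebyshev polynomial of the first kind equals x times the incomplete second-kind polynomial with parameter q²s, plus qs times the one-step-lower second-kind polynomial with parameter q²s. -/

import Mathlib

/-- q-integer [n]_q = (1-q^n)/(1-q). -/
noncomputable def qint (q : ℂ) (n : ℕ) : ℂ := (1 - q ^ n) / (1 - q)

/-- q-factorial [n]_q!. -/
noncomputable def qfact (q : ℂ) (n : ℕ) : ℂ := ∏ i ∈ Finset.range n, qint q (i + 1)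

/-- Gaussian (q-binomial) coefficient, 0 for k > n. -/
noncomputable def qbinom (q : ℂ) (n k : ℕ) : ℂ :=
  if k ≤ n then qfact q n / (qfact q (n - k) * qfact q k) else 0

/-- q-shifted factorial (x;q)_n. -/
noncomputable def qpoch (x q : ℂ) (n : ℕ) : ℂ := ∏ i ∈ Finset.range n, (1 - q ^ i * x)

/-- Partial sum defining incomplete q-Chebyshev polynomials of the second kind:
`Usum x s q n (k+1)` is U_n^k(x,s,q), and `Usum x s q n 0 = 0` is the empty sum (k = -1). -/
noncomputable def Usum (x s q : ℂ) (n m : ℕ) : ℂ :=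
  ∑ j ∈ Finset.range m,
    q ^ (j ^ 2) * qbinom q (n - j) j * (qpoch (-q) q (n - j) / qpoch (-q) q j) *
      s ^ j * x ^ (n - 2 * j)

/-- Partial sum defining incomplete q-Chebyshev polynomials of the first kind:
`Tsum x s q n (k+1)` is T_n^k(x,s,q). -/
noncomputable def Tsum (x s q : ℂ) (n m : ℕ) : ℂ :=
  ∑ j ∈ Finset.range m,
    q ^ (j ^ 2) * (qint q n / qint q (n - j)) * qbinom q (n - j) j *
      (qpoch (-q) q (n - j - 1) / qpoch (-q) q j) * s ^ j * x ^ (n - 2 * j)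



lemma pow_ne_one' (q : ℂ) (hq1 : ‖q‖ < 1) (m : ℕ) (hm : m ≠ 0) : q ^ m ≠ 1 := by
  intro h
  have : ‖q ^ m‖ < 1 := by
    rw [norm_pow]; exact pow_lt_one₀ (norm_nonneg q) hq1 hm
  rw [h] at this; simp at this

lemma pow_ne_negone (q : ℂ) (hq1 : ‖q‖ < 1) (m : ℕ) (hm : m ≠ 0) : q ^ m ≠ -1 := by
  intro h
  have : ‖q ^ m‖ < 1 := by
    rw [norm_pow]; exact pow_lt_one₀ (norm_nonneg q) hq1 hm
  rw [h] at this; simp at this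

lemma one_sub_ne (q : ℂ) (hq1 : ‖q‖ < 1) : (1 : ℂ) - q ≠ 0 := by
  intro h
  have : q = 1 := by linear_combination -h
  rw [this] at hq1; simp at hq1

lemma qint_ne (q : ℂ) (hq1 : ‖q‖ < 1) (m : ℕ) (hm : m ≠ 0) : qint q m ≠ 0 := by
  apply div_ne_zero _ (one_sub_ne q hq1)
  intro h
  exact pow_ne_one' q hq1 m hm (by linear_combination -h)

lemma qfact_ne (q : ℂ) (hq1 : ‖q‖ < 1) (m : ℕ) : qfact q m ≠ 0 := by
  apply Finset.prod_ne_zero_iff.mpr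
  intro i _
  exact qint_ne q hq1 (i+1) (Nat.succ_ne_zero i)

lemma qpoch_ne (q : ℂ) (hq1 : ‖q‖ < 1) (m : ℕ) : qpoch (-q) q m ≠ 0 := by
  apply Finset.prod_ne_zero_iff.mpr
  intro i _ h
  apply pow_ne_negone q hq1 (i+1) (Nat.succ_ne_zero i)
  rw [pow_succ]
  linear_combination h

lemma qfact_succ (q : ℂ) (m : ℕ) : qfact q (m+1) = qfact q m * qint q (m+1) :=
  Finset.prod_range_succ _ _

lemma qpoch_succ (x q : ℂ) (m : ℕ) : qpoch x q (m+1) = qpoch x q m * (1 - q ^ m * x) :=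
  Finset.prod_range_succ _ _

set_option maxHeartbeats 1000000 in
lemma key (q : ℂ) (hq1 : ‖q‖ < 1) (x s : ℂ) (j a : ℕ) :
    q^((j+1)^2) * (qint q (2*j+a+3) / qint q (j+a+2)) * qbinom q (j+a+2) (j+1) *
        (qpoch (-q) q (j+a+1) / qpoch (-q) q (j+1)) * s^(j+1) * x^(a+1)
    = x * (q^((j+1)^2) * qbinom q (j+a+1) (j+1) *
        (qpoch (-q) q (j+a+1) / qpoch (-q) q (j+1)) * (q^2*s)^(j+1) * x^a)
      + q * s * (q^(j^2) * qbinom q (j+a+1) j *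
        (qpoch (-q) q (j+a+1) / qpoch (-q) q j) * (q^2*s)^j * x^(a+1)) := by
  have e1 : j + a + 2 - (j+1) = a + 1 := by omega
  have e2 : j + a + 1 - (j+1) = a := by omega
  have e3 : j + a + 1 - j = a + 1 := by omega
  rw [qbinom, qbinom, qbinom, if_pos (by omega), if_pos (by omega), if_pos (by omega),
    e1, e2, e3]
  rw [qfact_succ q (j+a+1), qfact_succ q a, qfact_succ q j,
    show qpoch (-q) q (j+1) = qpoch (-q) q j * (1 + q^(j+1)) from by
      rw [qpoch_succ]; ring_nf]
  have hA := qfact_ne q hq1 (j+a+1)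
  have hB := qfact_ne q hq1 a
  have hC := qfact_ne q hq1 j
  have hD := qpoch_ne q hq1 (j+a+1)
  have hE := qpoch_ne q hq1 j
  have h1 := one_sub_ne q hq1
  have hP : (1 : ℂ) + q^(j+1) ≠ 0 := by
    have h := qpoch_ne q hq1 (j+1)
    rw [qpoch_succ] at h
    intro hc
    apply h
    rw [mul_eq_zero]; right; rw [pow_succ] at hc; linear_combination hc
  simp only [qint]
  rw [show (1:ℂ) - q^(2*j+a+3) = q^(2*j+2)*(1-q^(a+1)) + (1+q^(j+1))*(1-q^(j+1)) from by ring]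
  have hq2 : (1:ℂ) - q^(j+a+2) ≠ 0 := fun h => by
    apply qint_ne q hq1 (j+a+2) (by omega); simp [qint, h]
  have hq3 : (1:ℂ) - q^(a+1) ≠ 0 := fun h => by
    apply qint_ne q hq1 (a+1) (by omega); simp [qint, h]
  have hq4 : (1:ℂ) - q^(j+1) ≠ 0 := fun h => by
    apply qint_ne q hq1 (j+1) (by omega); simp [qint, h]
  set u := (1:ℂ) - q with hu
  set v2 := (1:ℂ) - q^(j+a+2) with hv2
  set v3 := (1:ℂ) - q^(a+1) with hv3
  set v4 := (1:ℂ) - q^(j+1) with hv4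
  set w := (1:ℂ) + q^(j+1) with hw
  set A := qfact q (j+a+1) with hA'
  set B := qfact q a with hB'
  set C := qfact q j with hC'
  set D := qpoch (-q) q (j+a+1) with hD'
  set E := qpoch (-q) q j with hE'
  have hqj : q^(j+1) = q^j * q := pow_succ q j
  rw [hqj] at hv4 hw
  clear_value u v2 v3 v4 w A B C D E
  clear hu hv2 hv3 hv4 hw hA' hB' hC' hD' hE' hqj
  have r1 : (q ^ (2*j+2) * v3 + w * v4) / u / (v2 / u)
      = (q ^ (2*j+2) * v3 + w * v4) / v2 := by
    rw [div_div_div_cancel_right₀]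
    exact h1
  have r2 : A * (v2 / u) / (B * (v3 / u) * (C * (v4 / u)))
      = (A * v2 * u) / (B * v3 * (C * v4)) := by
    field_simp
  have r3 : A / (B * (C * (v4 / u))) = A * u / (B * (C * v4)) := by
    field_simp
  have r4 : A / (B * (v3 / u) * C) = A * u / (B * v3 * C) := by
    field_simp
  rw [r1, r2, r3, r4]
  simp only [div_mul_div_comm, mul_div_assoc', div_mul_eq_mul_div, div_div]
  rw [div_add_div _ _ (by simp [h1, hq2, hq3, hq4, hP, hA, hB, hC, hD, hE])
    (by simp [h1, hq2, hq3, hq4, hP, hA, hB, hC, hD, hE]),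
    div_eq_div_iff (by simp [h1, hq2, hq3, hq4, hP, hA, hB, hC, hD, hE])
    (by simp [h1, hq2, hq3, hq4, hP, hA, hB, hC, hD, hE])]
  ring

lemma qbinom_zero (q : ℂ) (hq1 : ‖q‖ < 1) (m : ℕ) : qbinom q m 0 = 1 := by
  rw [qbinom, if_pos (Nat.zero_le m), Nat.sub_zero,
    show qfact q 0 = 1 from Finset.prod_range_zero _, mul_one]
  exact div_self (qfact_ne q hq1 m)

theorem Tinc_eq_Uinc_qsq (q : ℂ) (hq0 : 0 < ‖q‖) (hq1 : ‖q‖ < 1)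
    (x s : ℂ) (n k : ℕ) (hk : 2 * k ≤ n + 1) :
    Tsum x s q (n + 2) (k + 1) =
      x * Usum x (q ^ 2 * s) q (n + 1) (k + 1) + q * s * Usum x (q ^ 2 * s) q n k := by
  rw [Tsum, Usum, Usum]
  rw [Finset.sum_range_succ', Finset.sum_range_succ']
  rw [mul_add, Finset.mul_sum, Finset.mul_sum]
  have h0 : q ^ (0 ^ 2) * (qint q (n + 2) / qint q (n + 2 - 0)) * qbinom q (n + 2 - 0) 0 *
        (qpoch (-q) q (n + 2 - 0 - 1) / qpoch (-q) q 0) * s ^ 0 * x ^ (n + 2 - 2 * 0) =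
      x * (q ^ (0 ^ 2) * qbinom q (n + 1 - 0) 0 *
        (qpoch (-q) q (n + 1 - 0) / qpoch (-q) q 0) * (q ^ 2 * s) ^ 0 * x ^ (n + 1 - 2 * 0)) := by
    simp only [Nat.sub_zero, pow_zero, Nat.mul_zero, mul_one, one_mul]
    rw [qbinom_zero q hq1, qbinom_zero q hq1,
      div_self (qint_ne q hq1 (n + 2) (by omega)),
      show n + 2 - 1 = n + 1 from by omega,
      show qpoch (-q) q 0 = 1 from Finset.prod_range_zero _]
    rw [show n + 2 = (n + 1) + 1 from rfl, pow_succ]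
    ring
  have hstep : ∀ i ∈ Finset.range k,
      q ^ ((i + 1) ^ 2) * (qint q (n + 2) / qint q (n + 2 - (i + 1))) *
          qbinom q (n + 2 - (i + 1)) (i + 1) *
          (qpoch (-q) q (n + 2 - (i + 1) - 1) / qpoch (-q) q (i + 1)) * s ^ (i + 1) *
          x ^ (n + 2 - 2 * (i + 1)) =
        x * (q ^ ((i + 1) ^ 2) * qbinom q (n + 1 - (i + 1)) (i + 1) *
            (qpoch (-q) q (n + 1 - (i + 1)) / qpoch (-q) q (i + 1)) * (q ^ 2 * s) ^ (i + 1) *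
            x ^ (n + 1 - 2 * (i + 1))) +
          q * s * (q ^ (i ^ 2) * qbinom q (n - i) i *
            (qpoch (-q) q (n - i) / qpoch (-q) q i) * (q ^ 2 * s) ^ i * x ^ (n - 2 * i)) := by
    intro i hi
    have hik : i < k := Finset.mem_range.mp hi
    set a := n - 2 * i - 1 with ha
    have ea : n + 2 - (i + 1) - 1 = i + a + 1 := by omega
    have eb : n + 2 - (i + 1) = i + a + 2 := by omega
    have ec : n + 2 - 2 * (i + 1) = a + 1 := by omega
    have ed : n + 1 - (i + 1) = i + a + 1 := by omega
    have ee : n + 1 - 2 * (i + 1) = a := by omega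
    have ef : n - i = i + a + 1 := by omega
    have eg : n - 2 * i = a + 1 := by omega
    have eh : n + 2 = 2 * i + a + 3 := by omega
    rw [ea, eb, ec, ed, ee, ef, eg, eh]
    exact key q hq1 x s i a
  rw [Finset.sum_congr rfl hstep, Finset.sum_add_distrib, h0]
  ring
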